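/- Every vertex of the relative neighborhood graph of a finite planar point set in general position has degree at most 6 (in fact at most 5, but degree ≤ 6 suffices). -/

import Mathlib

noncomputable section
open Classical

abbrev Pt := EuclideanSpace ℝ (Fin 2)

/-- The relative neighborhood graph of a finite point set `V`. -/
def rng (V : Finset Pt) : SimpleGraph Pt where
  Adj u v := u ≠ v ∧ u ∈ V ∧ v ∈ V ∧
    ∀ w ∈ V, w ≠ u → w ≠ v → ¬ (dist u w < dist u v ∧ dist v w < dist u v)
  symm := ⟨by
    rintro u v ⟨h1, h2, h3, h4⟩
    refine ⟨h1.symm, h3, h2, fun w hw hwv hwu h => ?_⟩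
    rw [dist_comm v u] at h
    exact h4 w hw hwu hwv ⟨h.2, h.1⟩⟩
  loopless := ⟨fun u h => h.1 rfl⟩

/-- General position: all pairwise distances between points of `V` are distinct. -/
def GenPos (V : Finset Pt) : Prop :=
  ∀ u v x y : Pt, u ∈ V → v ∈ V → x ∈ V → y ∈ V → u ≠ v → x ≠ y →
    s(u, v) ≠ s(x, y) → dist u v ≠ dist x y

open EuclideanGeometry Real

instance : Fact (Module.finrank ℝ Pt = 2) := ⟨finrank_euclideanSpace_fin⟩
instance : Module.Oriented ℝ Pt (Fin 2) :=
  ⟨(EuclideanSpace.basisFun (Fin 2) ℝ).toBasis.orientation⟩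

/-- Helper: if `v, w` are RNG-neighbors of `u` with `dist u v < dist u w`, then the
angle at `u` exceeds `π/3`. -/
lemma rng_angle_gt_aux (V : Finset Pt) (hgp : GenPos V) {u v w : Pt}
    (hv : (rng V).Adj u v) (hw : (rng V).Adj u w) (hvw : v ≠ w)
    (hlt : dist u v < dist u w) : π / 3 < ∠ v u w := by
  obtain ⟨huv, huV, hvV, _⟩ := hv
  obtain ⟨huw, _, hwV, hw4⟩ := hw
  -- dist v w > dist u w
  have h1 : ¬ (dist u v < dist u w ∧ dist w v < dist u w) :=
    hw4 v hvV (Ne.symm huv) hvw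
  have h2 : dist u w ≤ dist w v := by
    by_contra h
    exact h1 ⟨hlt, not_le.mp h⟩
  have hne : dist w v ≠ dist u w := by
    apply hgp w v u w hwV hvV huV hwV (Ne.symm hvw) huw
    intro h
    rw [Sym2.eq, Sym2.rel_iff'] at h
    rcases h with h | h
    · exact huw (Prod.mk.inj h).1.symm
    · exact huv (Prod.mk.inj h).2.symm
  have h3 : dist u w < dist w v := lt_of_le_of_ne h2 (Ne.symm hne)
  -- now suppose angle ≤ π/3
  by_contra hang
  push_neg at hang
  have hcos : Real.cos (∠ v u w) ≥ 1 / 2 := by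
    rw [← Real.cos_pi_div_three]
    exact Real.cos_le_cos_of_nonneg_of_le_pi (angle_nonneg v u w)
      (by linarith [Real.pi_pos]) hang
  have hlaw : dist v w * dist v w = dist u v * dist u v + dist u w * dist u w -
      2 * dist u v * dist u w * Real.cos (∠ v u w) := by
    have := EuclideanGeometry.law_cos v u w
    rwa [dist_comm v u, dist_comm w u] at this
  have d1 : (0:ℝ) ≤ dist u v := dist_nonneg
  have d2 : (0:ℝ) ≤ dist u w := dist_nonneg
  have h3' : dist u w < dist v w := by rwa [dist_comm w v] at h3
  have hkey : dist u w * dist u w < dist v w * dist v w :=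
    mul_self_lt_mul_self d2 h3'
  nlinarith [hlaw, hkey, hcos, hlt, d1, d2, mul_nonneg d1 d2,
    mul_le_mul_of_nonneg_left hlt.le d1]

/-- Any two distinct RNG-neighbors of `u` subtend an angle greater than `π/3` at `u`. -/
lemma rng_angle_gt (V : Finset Pt) (hgp : GenPos V) {u v w : Pt}
    (hv : (rng V).Adj u v) (hw : (rng V).Adj u w) (hvw : v ≠ w) :
    π / 3 < ∠ v u w := by
  have hne : dist u v ≠ dist u w := by
    apply hgp u v u w hv.2.1 hv.2.2.1 hw.2.1 hw.2.2.1 hv.1 hw.1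
    intro h
    rw [Sym2.eq, Sym2.rel_iff'] at h
    rcases h with h | h
    · exact hvw (Prod.mk.inj h).2
    · exact hv.1 (Prod.mk.inj h).2.symm
  rcases lt_or_gt_of_ne hne with h | h
  · exact rng_angle_gt_aux V hgp hv hw hvw h
  · rw [EuclideanGeometry.angle_comm]
    exact rng_angle_gt_aux V hgp hw hv (Ne.symm hvw) h

/-- Every vertex of the relative neighborhood graph has at most 6 neighbors. -/
theorem stmt_3 (V : Finset Pt) (hgp : GenPos V) (u : Pt) :
    (V.filter (fun v => (rng V).Adj u v)).card ≤ 6 := by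
  by_contra hcard
  push_neg at hcard
  set S := V.filter (fun v => (rng V).Adj u v) with hS
  -- reference point
  set r : Pt := u + EuclideanSpace.single 0 1 with hr
  have hru : r ≠ u := by
    simp only [hr, ne_eq, add_eq_left]
    intro h
    have := congrArg (fun x : Pt => x (0 : Fin 2)) h
    simp [EuclideanSpace.single_apply] at this
  -- direction angle of each neighbor
  set θ : Pt → ℝ := fun v => (∡ r u v).toReal with hθ
  set f : Pt → ℤ := fun v => ⌈(θ v + π) * 3 / π⌉ with hf
  have hmaps : ∀ v ∈ S, f v ∈ Finset.Icc (1:ℤ) 6 := by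
    intro v _
    have h1 : -π < θ v := Real.Angle.neg_pi_lt_toReal _
    have h2 : θ v ≤ π := Real.Angle.toReal_le_pi _
    have hπ : (0:ℝ) < π := Real.pi_pos
    rw [Finset.mem_Icc]
    constructor
    · have hp : (0:ℝ) < (θ v + π) * 3 / π := div_pos (by linarith) hπ
      have := Int.ceil_pos.mpr hp
      simp only [hf]
      omega
    · simp only [hf]
      rw [Int.ceil_le, div_le_iff₀ hπ]
      push_cast
      nlinarith
  have hc : (Finset.Icc (1:ℤ) 6).card < S.card := by
    simp only [Int.card_Icc]
    omega
  obtain ⟨v, hvS, w, hwS, hvw, hfvw⟩ :=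
    Finset.exists_ne_map_eq_of_card_lt_of_maps_to hc hmaps
  have hvAdj : (rng V).Adj u v := (Finset.mem_filter.mp hvS).2
  have hwAdj : (rng V).Adj u w := (Finset.mem_filter.mp hwS).2
  -- |θ v - θ w| < π / 3
  have hπ : (0:ℝ) < π := Real.pi_pos
  have habs : |θ v - θ w| < π / 3 := by
    have hv1 : ((θ v + π) * 3 / π) ≤ (f v : ℝ) := Int.le_ceil _
    have hv2 : ((f v : ℝ)) < (θ v + π) * 3 / π + 1 := Int.ceil_lt_add_one _
    have hw1 : ((θ w + π) * 3 / π) ≤ (f w : ℝ) := Int.le_ceil _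
    have hw2 : ((f w : ℝ)) < (θ w + π) * 3 / π + 1 := Int.ceil_lt_add_one _
    rw [hfvw] at hv1 hv2
    set av := (θ v + π) * 3 / π with hav
    set aw := (θ w + π) * 3 / π with haw
    have hd1 : av - aw < 1 := by linarith
    have hd2 : aw - av < 1 := by linarith
    have ev : av * π = (θ v + π) * 3 := by rw [hav]; field_simp
    have ew : aw * π = (θ w + π) * 3 := by rw [haw]; field_simp
    rw [abs_lt]
    constructor
    · nlinarith [ev, ew, hd1, hd2, hπ]
    · nlinarith [ev, ew, hd1, hd2, hπ]
  -- oriented angle at u between v and w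
  have hvu : v ≠ u := fun h => hvAdj.1 h.symm
  have hwu : w ≠ u := fun h => hwAdj.1 h.symm
  have hoadd : ∡ v u r + ∡ r u w = ∡ v u w :=
    EuclideanGeometry.oangle_add hvu hru hwu
  have hrev : ∡ v u r = -∡ r u v := EuclideanGeometry.oangle_rev r u v
  have hco : ∡ v u w = ((θ w - θ v : ℝ) : Real.Angle) := by
    rw [← hoadd, hrev, hθ]
    push_cast
    rw [Real.Angle.coe_sub, Real.Angle.coe_toReal, Real.Angle.coe_toReal]
    abel
  have hang : ∠ v u w = |θ w - θ v| := by
    rw [EuclideanGeometry.angle_eq_abs_oangle_toReal hvu hwu, hco,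
      Real.Angle.toReal_coe_eq_self_iff.mpr]
    rw [abs_sub_comm] at habs
    rw [abs_lt] at habs
    constructor <;> [linarith; linarith]
  have hbig := rng_angle_gt V hgp hvAdj hwAdj hvw
  rw [hang, abs_sub_comm] at hbig
  linarith
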